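/- Let ρ ∈ (0,1), c > 0, and let (δ_k)_{k∈ℕ} be a positive real sequence such that δ_{k+1} ≤ (ρ + c ρ^{k+1}) δ_k + c ρ^{k+1} for all k ∈ ℕ. Then for all k ∈ ℕ, δ_k ≤ ρ^{k/2} · exp(c√ρ/(1−ρ)) · (δ_0 + c√ρ/(1−√ρ)). -/

import Mathlib

private lemma geom_sum_bound (r : ℝ) (h0 : 0 ≤ r) (h1 : r < 1) (n : ℕ) :
    ∑ i ∈ Finset.range n, r ^ i ≤ 1 / (1 - r) := by
  have h : (0:ℝ) < 1 - r := by linarith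
  rw [geom_sum_eq (ne_of_lt h1) n]
  have hrn : 0 ≤ r ^ n := pow_nonneg h0 n
  have heq : (r ^ n - 1) / (r - 1) = (1 - r ^ n) / (1 - r) := by
    rw [div_eq_div_iff (by linarith) (by linarith)]; ring
  rw [heq]
  gcongr
  linarith

/-- Application of Gladyshev's convergence to geometric sequences: if `ρ ∈ (0,1)`,
`c > 0` and the positive sequence `(δ k)` satisfies
`δ (k+1) ≤ (ρ + c ρ^(k+1)) δ k + c ρ^(k+1)`, then
`δ k ≤ ρ^(k/2) exp(c √ρ/(1-ρ)) (δ 0 + c √ρ/(1-√ρ))`. -/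
theorem geometric_gladyshev
    (ρ c : ℝ) (hρ : ρ ∈ Set.Ioo (0 : ℝ) 1) (hc : 0 < c)
    (δ : ℕ → ℝ) (hδ_pos : ∀ k, 0 < δ k)
    (hrec : ∀ k, δ (k + 1) ≤ (ρ + c * ρ ^ (k + 1)) * δ k + c * ρ ^ (k + 1)) :
    ∀ k, δ k ≤ Real.sqrt ρ ^ k * Real.exp (c * Real.sqrt ρ / (1 - ρ)) *
      (δ 0 + c * Real.sqrt ρ / (1 - Real.sqrt ρ)) := by
  obtain ⟨hρ0, hρ1⟩ := hρ
  set s := Real.sqrt ρ with hsdef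
  have hs0 : 0 < s := Real.sqrt_pos.mpr hρ0
  have hs2 : s ^ 2 = ρ := Real.sq_sqrt hρ0.le
  have hs1 : s < 1 := by nlinarith
  -- main induction
  have key : ∀ k, δ k ≤ s ^ k * (∏ j ∈ Finset.range k, (1 + c * s ^ (2*j+1))) *
      (δ 0 + c * ∑ j ∈ Finset.range k, s ^ (j+1)) := by
    intro k
    induction k with
    | zero => simp
    | succ k ih =>
      have hP0 : (0:ℝ) ≤ ∏ j ∈ Finset.range k, (1 + c * s ^ (2*j+1)) :=
        Finset.prod_nonneg fun j _ => by nlinarith [pow_pos hs0 (2*j+1)]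
      have hQ : (1:ℝ) ≤ ∏ j ∈ Finset.range k, (1 + c * s ^ (2*j+1)) := by
        have h1 : ∏ j ∈ Finset.range k, (1:ℝ) ≤ ∏ j ∈ Finset.range k, (1 + c * s ^ (2*j+1)) :=
          Finset.prod_le_prod (fun j _ => zero_le_one)
            (fun j _ => by nlinarith [pow_pos hs0 (2*j+1)])
        simpa using h1
      have hP1 : (1:ℝ) ≤ (∏ j ∈ Finset.range k, (1 + c * s ^ (2*j+1))) * (1 + c * s ^ (2*k+1)) := by
        have hx : (1:ℝ) ≤ 1 + c * s ^ (2*k+1) := by nlinarith [pow_pos hs0 (2*k+1)]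
        simpa using mul_le_mul hQ hx zero_le_one (le_trans zero_le_one hQ)
      have hS0 : (0:ℝ) ≤ ∑ j ∈ Finset.range k, s ^ (j+1) :=
        Finset.sum_nonneg fun j _ => (pow_pos hs0 (j+1)).le
      have h1 := hrec k
      rw [← hs2] at h1
      have hA : (s^2 + c*(s^2)^(k+1)) * s^k ≤ s^(k+1) * (1 + c * s^(2*k+1)) := by
        have he : (s^2 + c*(s^2)^(k+1)) * s^k = s^(k+1) * (s + c * s^(2*k+1)) := by ring
        rw [he]
        have : s + c * s^(2*k+1) ≤ 1 + c * s^(2*k+1) := by linarith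
        exact mul_le_mul_of_nonneg_left this (pow_nonneg hs0.le _)
      have hδ0 : 0 ≤ δ 0 := (hδ_pos 0).le
      rw [Finset.prod_range_succ, Finset.sum_range_succ]
      calc δ (k+1) ≤ (s^2 + c*(s^2)^(k+1)) * δ k + c*(s^2)^(k+1) := h1
        _ ≤ (s^2 + c*(s^2)^(k+1)) * (s ^ k * (∏ j ∈ Finset.range k, (1 + c * s ^ (2*j+1))) *
              (δ 0 + c * ∑ j ∈ Finset.range k, s ^ (j+1))) + c*(s^2)^(k+1) := by
            have hcoef : 0 ≤ s^2 + c*(s^2)^(k+1) := by positivity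
            gcongr
        _ = ((s^2 + c*(s^2)^(k+1)) * s^k) * ((∏ j ∈ Finset.range k, (1 + c * s ^ (2*j+1))) *
              (δ 0 + c * ∑ j ∈ Finset.range k, s ^ (j+1))) + c*(s^2)^(k+1) := by ring
        _ ≤ (s^(k+1) * (1 + c * s^(2*k+1))) * ((∏ j ∈ Finset.range k, (1 + c * s ^ (2*j+1))) *
              (δ 0 + c * ∑ j ∈ Finset.range k, s ^ (j+1))) + c*(s^2)^(k+1) := by
            have hmul : 0 ≤ (∏ j ∈ Finset.range k, (1 + c * s ^ (2*j+1))) *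
              (δ 0 + c * ∑ j ∈ Finset.range k, s ^ (j+1)) := by positivity
            exact add_le_add_left (mul_le_mul_of_nonneg_right hA hmul) _
        _ = s^(k+1) * ((∏ j ∈ Finset.range k, (1 + c * s ^ (2*j+1))) * (1 + c * s^(2*k+1))) *
              (δ 0 + c * ∑ j ∈ Finset.range k, s ^ (j+1)) + (c * s^(k+1)) * s^(k+1) := by ring
        _ ≤ s^(k+1) * ((∏ j ∈ Finset.range k, (1 + c * s ^ (2*j+1))) * (1 + c * s^(2*k+1))) *
              (δ 0 + c * ∑ j ∈ Finset.range k, s ^ (j+1)) + (c * s^(k+1)) *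
              (s^(k+1) * ((∏ j ∈ Finset.range k, (1 + c * s ^ (2*j+1))) * (1 + c * s^(2*k+1)))) := by
            have h2 : s^(k+1) ≤ s^(k+1) * ((∏ j ∈ Finset.range k, (1 + c * s ^ (2*j+1))) *
                (1 + c * s^(2*k+1))) :=
              le_mul_of_one_le_right (pow_nonneg hs0.le _) hP1
            have h3 : 0 ≤ c * s^(k+1) := by positivity
            nlinarith
        _ = s^(k+1) * ((∏ j ∈ Finset.range k, (1 + c * s ^ (2*j+1))) * (1 + c * s^(2*k+1))) *
              (δ 0 + c * ((∑ j ∈ Finset.range k, s ^ (j+1)) + s^(k+1))) := by ring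
  intro k
  refine (key k).trans ?_
  have hPexp : (∏ j ∈ Finset.range k, (1 + c * s ^ (2*j+1))) ≤ Real.exp (c * s / (1 - ρ)) := by
    calc (∏ j ∈ Finset.range k, (1 + c * s ^ (2*j+1)))
        ≤ ∏ j ∈ Finset.range k, Real.exp (c * s ^ (2*j+1)) := by
          apply Finset.prod_le_prod
          · intro j _; nlinarith [pow_pos hs0 (2*j+1)]
          · intro j _
            have := Real.add_one_le_exp (c * s ^ (2*j+1))
            linarith
      _ = Real.exp (∑ j ∈ Finset.range k, c * s ^ (2*j+1)) := (Real.exp_sum _ _).symm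
      _ ≤ Real.exp (c * s / (1 - ρ)) := by
          apply Real.exp_le_exp.mpr
          have he : ∑ j ∈ Finset.range k, c * s ^ (2*j+1) =
              c * s * ∑ j ∈ Finset.range k, (s^2) ^ j := by
            rw [Finset.mul_sum]
            apply Finset.sum_congr rfl
            intro j _; rw [← pow_mul]; ring
          rw [he, ← hs2]
          have hb := geom_sum_bound (s^2) (by positivity) (by nlinarith) k
          have hcs : 0 ≤ c * s := by positivity
          calc c * s * ∑ j ∈ Finset.range k, (s^2) ^ j ≤ c * s * (1 / (1 - s^2)) :=
                mul_le_mul_of_nonneg_left hb hcs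
            _ = c * s / (1 - s^2) := by ring
  have hSb : (∑ j ∈ Finset.range k, s ^ (j+1)) ≤ s / (1 - s) := by
    have he : ∑ j ∈ Finset.range k, s ^ (j+1) = s * ∑ j ∈ Finset.range k, s ^ j := by
      rw [Finset.mul_sum]
      exact Finset.sum_congr rfl fun j _ => by ring
    rw [he]
    have hb := geom_sum_bound s hs0.le hs1 k
    calc s * ∑ j ∈ Finset.range k, s ^ j ≤ s * (1 / (1 - s)) :=
          mul_le_mul_of_nonneg_left hb hs0.le
      _ = s / (1 - s) := by ring
  have hδ0 : 0 ≤ δ 0 := (hδ_pos 0).le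
  have hS0 : (0:ℝ) ≤ ∑ j ∈ Finset.range k, s ^ (j+1) :=
    Finset.sum_nonneg fun j _ => (pow_pos hs0 (j+1)).le
  have h1 : s ^ k * (∏ j ∈ Finset.range k, (1 + c * s ^ (2*j+1))) ≤
      s ^ k * Real.exp (c * s / (1 - ρ)) :=
    mul_le_mul_of_nonneg_left hPexp (pow_nonneg hs0.le k)
  have h2 : δ 0 + c * ∑ j ∈ Finset.range k, s ^ (j+1) ≤ δ 0 + c * s / (1 - s) := by
    have : c * ∑ j ∈ Finset.range k, s ^ (j+1) ≤ c * s / (1 - s) := by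
      calc c * ∑ j ∈ Finset.range k, s ^ (j+1) ≤ c * (s / (1 - s)) :=
            mul_le_mul_of_nonneg_left hSb hc.le
        _ = c * s / (1 - s) := by ring
    linarith
  have hP0 : (0:ℝ) ≤ ∏ j ∈ Finset.range k, (1 + c * s ^ (2*j+1)) :=
    Finset.prod_nonneg fun j _ => by nlinarith [pow_pos hs0 (2*j+1)]
  exact mul_le_mul h1 h2 (by positivity) (by positivity)
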